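/- Let T1 and T2 be full binary trees with n internal nodes each, and for i ∈ {1,2} let T_i' be the tree obtained from the right comb on n+1 internal nodes by replacing the left-child leaf of its root with the tree T_i. Then T_1' and T_2' have height n+1, and for every k ∈ ℕ, d(T1, T2) ≤ k if and only if d_H(T_1', T_2') ≤ k. -/
import Mathlib


/-- Full binary trees: every node is a leaf or has exactly two children.
`node l r` is an internal node with left subtree `l` and right subtree `r`. -/
inductive FBT : Type
  | leaf : FBT
  | node : FBT → FBT → FBT
  deriving DecidableEq

namespace FBT

/-- Number of internal nodes. -/
def internal : FBT → ℕ
  | leaf => 0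
  | node l r => internal l + internal r + 1

/-- Height: maximum number of internal nodes on a root-to-leaf path. -/
def height : FBT → ℕ
  | leaf => 0
  | node l r => max (height l) (height r) + 1

/-- Rank of a full binary tree (Ehrenfeucht–Haussler rank). -/
def rank : FBT → ℕ
  | leaf => 0
  | node l r => if rank l = rank r then rank l + 1 else max (rank l) (rank r)

/-- A full binary tree is skew if every internal node has at least one leaf child. -/
def skew : FBT → Prop
  | leaf => True
  | node l r => (l = leaf ∨ r = leaf) ∧ skew l ∧ skew r

/-- Pre-order traversal of the internal nodes, labeled by the in-order labeling
(1-indexed); `off` is the number of in-order labels used strictly to the left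
of this subtree.  `T.preorderAux 0` is the tree permutation of `T`, as a list. -/
def preorderAux : FBT → ℕ → List ℕ
  | leaf, _ => []
  | node l r, off =>
      (off + internal l + 1) :: (preorderAux l off ++ preorderAux r (off + internal l + 1))

/-- Number of internal nodes on the rightmost root-to-leaf path. -/
def rightPath : FBT → ℕ
  | leaf => 0
  | node _ r => rightPath r + 1

end FBT

/-- One (left or right) rotation, performed at some node of the tree. -/
inductive Rot : FBT → FBT → Prop
  | rotR (C D E : FBT) : Rot (FBT.node (FBT.node C D) E) (FBT.node C (FBT.node D E))
  | rotL (C D E : FBT) : Rot (FBT.node C (FBT.node D E)) (FBT.node (FBT.node C D) E)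
  | congrL {l l' : FBT} (r : FBT) : Rot l l' → Rot (FBT.node l r) (FBT.node l' r)
  | congrR {r r' : FBT} (l : FBT) : Rot r r' → Rot (FBT.node l r) (FBT.node l r')

/-- `RotChainP P k T1 T2`: there is a sequence of `k` rotations transforming `T1`
into `T2` in which every tree reached along the way satisfies `P`. -/
def RotChainP (P : FBT → Prop) : ℕ → FBT → FBT → Prop
  | 0, T1, T2 => T1 = T2
  | k+1, T1, T2 => ∃ T, Rot T1 T ∧ P T ∧ RotChainP P k T T2

/-- `RotChain k T1 T2`: `T1` can be transformed into `T2` by `k` rotations. -/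
def RotChain : ℕ → FBT → FBT → Prop := RotChainP fun _ => True

/-- The rotation distance between two full binary trees. -/
noncomputable def rotDist (T1 T2 : FBT) : ℕ := sInf {k | RotChain k T1 T2}

/-- The right comb on `n` internal nodes. -/
def rightComb : ℕ → FBT
  | 0 => FBT.leaf
  | n+1 => FBT.node FBT.leaf (rightComb n)

/-- The left comb on `n` internal nodes. -/
def leftComb : ℕ → FBT
  | 0 => FBT.leaf
  | n+1 => FBT.node (leftComb n) FBT.leaf

/-- The complete binary tree of height `r`. -/
def completeTree : ℕ → FBT
  | 0 => FBT.leaf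
  | r+1 => FBT.node (completeTree r) (completeTree r)

/-- Replace the leftmost leaf of the first tree by the second tree. -/
def attachLeftmost : FBT → FBT → FBT
  | FBT.leaf, S => S
  | FBT.node l r, S => FBT.node (attachLeftmost l S) r

/-- The transposition `δ_{i,j,k}` (1-indexed, `1 ≤ i < j < k`) applied to a list:
the consecutive blocks occupying positions `i..j-1` and `j..k-1` are swapped,
all other positions are left fixed. -/
def transposeList (i j k : ℕ) (l : List ℕ) : List ℕ :=
  l.take (i-1) ++ (l.drop (j-1)).take (k-j) ++ (l.drop (i-1)).take (j-i) ++ l.drop (k-1)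

/-- `δ_{i,j,k}` is a tree transposition (on permutations of `n` elements): there are
full binary trees `T1, T2` with `n` internal nodes each, at rotation distance `1`,
whose tree permutations `σ, τ` satisfy `δ_{i,j,k}(σ) = τ`. -/
def IsTreeTransposition (n i j k : ℕ) : Prop :=
  ∃ T1 T2 : FBT, T1.internal = n ∧ T2.internal = n ∧ rotDist T1 T2 = 1 ∧
    transposeList i j k (T1.preorderAux 0) = T2.preorderAux 0

/-- `σ` (a permutation of `Fin n`) is a tree permutation: the pre-order traversal of
some full binary tree with `n` internal nodes under the in-order labeling.
(Positions and values are converted to 1-indexed labels.) -/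
def IsTreePerm (n : ℕ) (σ : Equiv.Perm (Fin n)) : Prop :=
  ∃ T : FBT, T.internal = n ∧ T.preorderAux 0 = List.ofFn fun i => (σ i : ℕ) + 1

/-- `σ` is a skew permutation: the tree permutation of some full skew tree. -/
def IsSkewPerm (n : ℕ) (σ : Equiv.Perm (Fin n)) : Prop :=
  ∃ T : FBT, T.internal = n ∧ T.skew ∧ T.preorderAux 0 = List.ofFn fun i => (σ i : ℕ) + 1

/-- `SkewSim σ τ` (written `σ ∼ τ` in the paper): `τ` is obtained from `σ` (lists,
0-indexed) by a skew transposition: for some position `i`, `σ(i)` and `σ(i+1)` are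
respectively the min and the max (or the max and the min) of the suffix starting at
position `i`, and `τ` is `σ` with the entries at positions `i` and `i+1` swapped. -/
def SkewSim (σ τ : List ℕ) : Prop :=
  ∃ i : ℕ, i + 1 < σ.length ∧
    (((∀ x ∈ σ.drop i, σ.getD i 0 ≤ x) ∧ (∀ x ∈ σ.drop i, x ≤ σ.getD (i+1) 0)) ∨
     ((∀ x ∈ σ.drop i, x ≤ σ.getD i 0) ∧ (∀ x ∈ σ.drop i, σ.getD (i+1) 0 ≤ x))) ∧
    τ = σ.take i ++ [σ.getD (i+1) 0, σ.getD i 0] ++ σ.drop (i+2)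

/-- The tree polynomial of a full binary tree: the sum over all leaves of `x^a y^b`,
where `a` (resp. `b`) is the number of left (resp. right) edges on the root-to-leaf
path.  `X 0` plays the role of `x` and `X 1` the role of `y`. -/
noncomputable def treePoly : FBT → MvPolynomial (Fin 2) ℕ
  | FBT.leaf => 1
  | FBT.node l r => MvPolynomial.X 0 * treePoly l + MvPolynomial.X 1 * treePoly r

/-! ### Auxiliary lemmas -/

namespace FBT

/-- Number of leaves. -/
def lv (t : FBT) : ℕ := t.internal + 1

@[simp] lemma lv_leaf : lv leaf = 1 := rfl

@[simp] lemma lv_node (l r : FBT) : lv (node l r) = lv l + lv r := by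
  simp [lv, internal]; omega

lemma height_le_internal : ∀ T : FBT, T.height ≤ T.internal
  | leaf => le_refl 0
  | node l r => by
      have hl := height_le_internal l
      have hr := height_le_internal r
      simp only [height, internal]
      omega

/-- The tree induced on the leftmost `i` leaves. -/
def trunc : FBT → ℕ → FBT
  | leaf, _ => leaf
  | node l r, i => if i ≤ l.lv then trunc l i else node l (trunc r (i - l.lv))

lemma trunc_of_le : ∀ T : FBT, ∀ i, T.lv ≤ i → trunc T i = T
  | leaf, _, _ => rfl
  | node l r, i, h => by
      have hl : 1 ≤ lv l := Nat.succ_le_of_lt (Nat.pos_of_ne_zero (by simp [lv]))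
      have hr : 1 ≤ lv r := Nat.succ_le_of_lt (Nat.pos_of_ne_zero (by simp [lv]))
      simp only [lv_node] at h
      have hnle : ¬ i ≤ l.lv := by omega
      simp only [trunc, hnle, if_false]
      rw [trunc_of_le r (i - l.lv) (by omega)]

end FBT

lemma rot_internal {T T' : FBT} (h : Rot T T') : T.internal = T'.internal := by
  induction h with
  | rotR C D E => simp [FBT.internal]; omega
  | rotL C D E => simp [FBT.internal]; omega
  | congrL r _ ih => simp [FBT.internal, ih]
  | congrR l _ ih => simp [FBT.internal, ih]

lemma rot_lv {T T' : FBT} (h : Rot T T') : T.lv = T'.lv := by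
  simp [FBT.lv, rot_internal h]

lemma rot_symm {T T' : FBT} (h : Rot T T') : Rot T' T := by
  induction h with
  | rotR C D E => exact Rot.rotL C D E
  | rotL C D E => exact Rot.rotR C D E
  | congrL r _ ih => exact Rot.congrL r ih
  | congrR l _ ih => exact Rot.congrR l ih

lemma rot_trunc_aux (C D E : FBT) (i : ℕ) :
    FBT.trunc (FBT.node (FBT.node C D) E) i = FBT.trunc (FBT.node C (FBT.node D E)) i ∨
    Rot (FBT.trunc (FBT.node (FBT.node C D) E) i)
        (FBT.trunc (FBT.node C (FBT.node D E)) i) := by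
  by_cases h1 : i ≤ C.lv
  · left
    have h2 : i ≤ C.lv + D.lv := by omega
    simp [FBT.trunc, h1, h2]
  · by_cases h2 : i ≤ C.lv + D.lv
    · left
      simp [FBT.trunc, h1, h2, show i - C.lv ≤ D.lv by omega]
    · right
      simp only [FBT.trunc, FBT.lv_node, h1, h2, if_false,
        show ¬ i - C.lv ≤ D.lv by omega]
      have : i - (C.lv + D.lv) = i - C.lv - D.lv := by omega
      rw [this]
      exact Rot.rotR C D (FBT.trunc E (i - C.lv - D.lv))

lemma rot_trunc_all {T T' : FBT} (h : Rot T T') :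
    ∀ i : ℕ, T.trunc i = T'.trunc i ∨ Rot (T.trunc i) (T'.trunc i) := by
  induction h with
  | rotR C D E => exact fun i => rot_trunc_aux C D E i
  | rotL C D E =>
      intro i
      rcases rot_trunc_aux C D E i with h | h
      · exact Or.inl h.symm
      · exact Or.inr (rot_symm h)
  | @congrL l l' r hr ih =>
      intro i
      by_cases h1 : i ≤ l.lv
      · have h1' : i ≤ l'.lv := by rw [← rot_lv hr]; exact h1
        simp only [FBT.trunc, h1, h1', if_true]
        exact ih i
      · have h1' : ¬ i ≤ l'.lv := by rw [← rot_lv hr]; exact h1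
        simp only [FBT.trunc, h1, h1', if_false, rot_lv hr]
        exact Or.inr (Rot.congrL _ hr)
  | @congrR r r' l hr ih =>
      intro i
      by_cases h1 : i ≤ l.lv
      · simp only [FBT.trunc, h1, if_true]
        exact Or.inl trivial
      · simp only [FBT.trunc, h1, if_false]
        rcases ih (i - l.lv) with h | h
        · exact Or.inl (by rw [h])
        · exact Or.inr (Rot.congrR _ h)

lemma rot_trunc {T T' : FBT} (i : ℕ) (h : Rot T T') :
    T.trunc i = T'.trunc i ∨ Rot (T.trunc i) (T'.trunc i) :=
  rot_trunc_all h i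

lemma chain_proj {P : FBT → Prop} (i : ℕ) :
    ∀ m (S S' : FBT), RotChainP P m S S' →
      ∃ m' ≤ m, RotChain m' (S.trunc i) (S'.trunc i) := by
  intro m
  induction m with
  | zero =>
      intro S S' h
      exact ⟨0, le_refl 0, by rw [show S = S' from h]; rfl⟩
  | succ m ih =>
      rintro S S' ⟨T, hrot, _, hchain⟩
      obtain ⟨m', hm', hc⟩ := ih T S' hchain
      rcases rot_trunc i hrot with heq | hr
      · exact ⟨m', by omega, by rw [heq]; exact hc⟩
      · exact ⟨m' + 1, by omega, ⟨T.trunc i, hr, trivial, hc⟩⟩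

lemma rightComb_internal : ∀ n, (rightComb n).internal = n
  | 0 => rfl
  | n + 1 => by simp [rightComb, FBT.internal, rightComb_internal n]

lemma rightComb_height : ∀ n, (rightComb n).height = n
  | 0 => rfl
  | n + 1 => by simp [rightComb, FBT.height, rightComb_height n]

lemma height_node_comb {n : ℕ} {T : FBT} (h : T.internal = n) :
    (FBT.node T (rightComb n)).height = n + 1 := by
  have := FBT.height_le_internal T
  simp [FBT.height, rightComb_height n]
  omega

lemma chain_internal : ∀ m (T T' : FBT), RotChain m T T' → T.internal = T'.internal := by
  intro m
  induction m with
  | zero => intro T T' h; rw [show T = T' from h]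
  | succ m ih =>
      rintro T T' ⟨S, hrot, _, hchain⟩
      rw [rot_internal hrot]; exact ih S T' hchain

lemma chain_lift {n : ℕ} :
    ∀ m (T T2 : FBT), T.internal = n → RotChain m T T2 →
      RotChainP (fun S => S.height ≤ n + 1) m
        (FBT.node T (rightComb n)) (FBT.node T2 (rightComb n)) := by
  intro m
  induction m with
  | zero =>
      intro T T2 _ h
      rw [show T = T2 from h]; rfl
  | succ m ih =>
      rintro T T2 hT ⟨S, hrot, _, hchain⟩
      refine ⟨FBT.node S (rightComb n), Rot.congrL _ hrot, ?_, ?_⟩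
      · have hS : S.internal = n := by rw [← rot_internal hrot, hT]
        exact le_of_eq (height_node_comb hS)
      · exact ih S T2 (by rw [← rot_internal hrot, hT]) hchain

lemma rotChainP_mono {P Q : FBT → Prop} (hPQ : ∀ x, P x → Q x) :
    ∀ m (T T' : FBT), RotChainP P m T T' → RotChainP Q m T T' := by
  intro m
  induction m with
  | zero => intro T T' h; exact h
  | succ m ih =>
      rintro T T' ⟨S, hrot, hP, hchain⟩
      exact ⟨S, hrot, hPQ S hP, ih S T' hchain⟩

/-- attaching each `T_i` (with `n` internal nodes) as left subtree of the
root of the right comb on `n+1` internal nodes (i.e. replacing the left-child leaf of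
its root) produces trees `T_i'` of height `n+1`, and `d(T1,T2) ≤ k` iff
`d_H(T1',T2') ≤ k` for every `k`. -/
theorem rotdist_reduces_to_height_bounded (n : ℕ) (T1 T2 : FBT)
    (h1 : T1.internal = n) (h2 : T2.internal = n) :
    (FBT.node T1 (rightComb n)).height = n + 1 ∧
    (FBT.node T2 (rightComb n)).height = n + 1 ∧
    ∀ k : ℕ,
      (∃ m ≤ k, RotChain m T1 T2) ↔
      (∃ m ≤ k, RotChainP
        (fun S => S.height ≤
          max (FBT.node T1 (rightComb n)).height (FBT.node T2 (rightComb n)).height)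
        m (FBT.node T1 (rightComb n)) (FBT.node T2 (rightComb n))) := by
  have hh1 : (FBT.node T1 (rightComb n)).height = n + 1 := height_node_comb h1
  have hh2 : (FBT.node T2 (rightComb n)).height = n + 1 := height_node_comb h2
  refine ⟨hh1, hh2, fun k => ⟨?_, ?_⟩⟩
  · rintro ⟨m, hmk, hchain⟩
    refine ⟨m, hmk, rotChainP_mono (fun x hx => ?_) m _ _ (chain_lift m T1 T2 h1 hchain)⟩
    rw [hh1, hh2]
    simpa using hx
  · rintro ⟨m, hmk, hchain⟩
    obtain ⟨m', hm', hc⟩ := chain_proj (n + 1) m _ _ hchain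
    refine ⟨m', le_trans hm' hmk, ?_⟩
    have hc1 : (FBT.node T1 (rightComb n)).trunc (n + 1) = T1 := by
      simp only [FBT.trunc, FBT.lv, h1, le_refl, if_true]
      exact FBT.trunc_of_le T1 (n + 1) (by simp [FBT.lv, h1])
    have hc2 : (FBT.node T2 (rightComb n)).trunc (n + 1) = T2 := by
      simp only [FBT.trunc, FBT.lv, h2, le_refl, if_true]
      exact FBT.trunc_of_le T2 (n + 1) (by simp [FBT.lv, h2])
    rwa [hc1, hc2] at hc
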